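/- (Theorem 1, size under H10.) For each n let (Ω_n, μ_n) be a probability space carrying random variables P_{α,n} ≥ 0 and P_{β,n}, where P_{β,n} is Uniform(0,1) and P_{α,n} → 0 in probability (for every ε > 0, μ_n({P_{α,n} ≥ ε}) → 0), and let A_n ⊆ Ω_n be measurable events with μ_n(A_n) → 0. Set P_{JS,n} = max(P_{α,n}, P_{β,n}) and define P_{AJS,n} = P_{JS,n}² on A_n and P_{AJS,n} = P_{JS,n} on the complement of A_n. Then for every δ ∈ (0,1), μ_n({P_{AJS,n} < δ}) → δ as n → ∞; i.e., the asymptotic size of the AJS test under H10 equals the nominal level δ. -/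

import Mathlib

open MeasureTheory ProbabilityTheory Set Filter
open scoped Classical ENNReal

/-- Theorem 1, size under H10: For each `n`, let `(Ω n, μ n)` carry
p-values `Pα n ≥ 0` and `Pβ n`, with `Pβ n` Uniform(0,1), `Pα n → 0` in probability,
and measurable events `A n` with `μ n (A n) → 0`.  With `P_JS = max (Pα, Pβ)` and
`P_AJS = P_JS²` on `A n`, `P_JS` off `A n`, the AJS rejection probability at level
`δ ∈ (0,1)` tends to `δ`. -/
theorem ajs_size_under_H10
    {Ω : ℕ → Type*} [∀ n, MeasurableSpace (Ω n)]
    (μ : ∀ n, Measure (Ω n)) [∀ n, IsProbabilityMeasure (μ n)]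
    (Pα Pβ : ∀ n, Ω n → ℝ)
    (hPα : ∀ n, Measurable (Pα n)) (hPβ : ∀ n, Measurable (Pβ n))
    (hPαnonneg : ∀ n ω, 0 ≤ Pα n ω)
    (hlawβ : ∀ n, Measure.map (Pβ n) (μ n) = volume.restrict (Icc (0:ℝ) 1))
    (hPα0 : ∀ ε : ℝ, 0 < ε →
      Tendsto (fun n => μ n {ω | ε ≤ Pα n ω}) atTop (nhds 0))
    (A : ∀ n, Set (Ω n)) (hA : ∀ n, MeasurableSet (A n))
    (hA0 : Tendsto (fun n => μ n (A n)) atTop (nhds 0))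
    (PAJS : ∀ n, Ω n → ℝ)
    (hdef : ∀ n ω, PAJS n ω =
      if ω ∈ A n then (max (Pα n ω) (Pβ n ω)) ^ 2 else max (Pα n ω) (Pβ n ω))
    (δ : ℝ) (hδ : δ ∈ Ioo (0:ℝ) 1) :
    Tendsto (fun n => μ n {ω | PAJS n ω < δ}) atTop (nhds (ENNReal.ofReal δ)) := by
  obtain ⟨hδ0, hδ1⟩ := hδ
  have hβδ : ∀ n, μ n {ω | Pβ n ω < δ} = ENNReal.ofReal δ := by
    intro n
    have h1 : {ω | Pβ n ω < δ} = Pβ n ⁻¹' (Iio δ) := rfl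
    rw [h1, ← Measure.map_apply (hPβ n) measurableSet_Iio, hlawβ n,
      Measure.restrict_apply measurableSet_Iio]
    have h2 : Iio δ ∩ Icc (0:ℝ) 1 = Ico 0 δ := by
      ext x
      simp only [mem_inter_iff, mem_Iio, mem_Icc, mem_Ico]
      constructor
      · rintro ⟨h1, h2, h3⟩; exact ⟨h2, h1⟩
      · rintro ⟨h1, h2⟩; exact ⟨h2, h1, le_of_lt (h2.trans hδ1)⟩
    rw [h2, Real.volume_Ico, sub_zero]
  have hupper : ∀ n, μ n {ω | PAJS n ω < δ} ≤ ENNReal.ofReal δ + μ n (A n) := by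
    intro n
    have hsub : {ω | PAJS n ω < δ} ⊆ {ω | Pβ n ω < δ} ∪ A n := by
      intro ω hω
      by_cases h : ω ∈ A n
      · exact Or.inr h
      · left
        simp only [mem_setOf_eq] at hω ⊢
        rw [hdef n ω, if_neg h] at hω
        exact lt_of_le_of_lt (le_max_right _ _) hω
    calc μ n {ω | PAJS n ω < δ} ≤ μ n ({ω | Pβ n ω < δ} ∪ A n) := measure_mono hsub
      _ ≤ μ n {ω | Pβ n ω < δ} + μ n (A n) := measure_union_le _ _
      _ = ENNReal.ofReal δ + μ n (A n) := by rw [hβδ n]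
  have hlower : ∀ n, ENNReal.ofReal δ - (μ n (A n) + μ n {ω | δ ≤ Pα n ω})
      ≤ μ n {ω | PAJS n ω < δ} := by
    intro n
    rw [tsub_le_iff_right]
    have hsub : {ω | Pβ n ω < δ} ⊆ {ω | PAJS n ω < δ} ∪ (A n ∪ {ω | δ ≤ Pα n ω}) := by
      intro ω hω
      by_cases hA' : ω ∈ A n
      · exact Or.inr (Or.inl hA')
      by_cases hα : δ ≤ Pα n ω
      · exact Or.inr (Or.inr hα)
      · left
        simp only [mem_setOf_eq] at hω ⊢
        rw [hdef n ω, if_neg hA']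
        exact max_lt (lt_of_not_ge hα) hω
    calc ENNReal.ofReal δ = μ n {ω | Pβ n ω < δ} := (hβδ n).symm
      _ ≤ μ n ({ω | PAJS n ω < δ} ∪ (A n ∪ {ω | δ ≤ Pα n ω})) := measure_mono hsub
      _ ≤ μ n {ω | PAJS n ω < δ} + μ n (A n ∪ {ω | δ ≤ Pα n ω}) := measure_union_le _ _
      _ ≤ μ n {ω | PAJS n ω < δ} + (μ n (A n) + μ n {ω | δ ≤ Pα n ω}) :=
        add_le_add_right (measure_union_le _ _) _
  refine tendsto_of_tendsto_of_tendsto_of_le_of_le ?_ ?_ hlower hupper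
  · have h2 := ENNReal.Tendsto.sub (tendsto_const_nhds (x := ENNReal.ofReal δ))
      (hA0.add (hPα0 δ hδ0)) (Or.inl ENNReal.ofReal_ne_top)
    simpa using h2
  · simpa using (tendsto_const_nhds (x := ENNReal.ofReal δ)).add hA0
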